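/- Let n ≥ 7 and let G be a finite simple graph on n vertices such that both G and its complement are connected. Then G or its complement has a connected dominating set of cardinality at most ⌈√(2n − 4)⌉ − 1; that is, min{γ_c(G), γ_c(complement of G)} ≤ ⌈√(2n − 4)⌉ − 1. -/
import Mathlib


/-- `S` is a connected dominating set of the simple graph `G`: the subgraph of `G`
induced by `S` is connected (in particular `S` is nonempty) and every vertex
outside `S` has a neighbor in `S`. -/
def ConnDomSet {V : Type*} (G : SimpleGraph V) (S : Finset V) : Prop :=
  S.Nonempty ∧ (G.induce (↑S : Set V)).Connected ∧ ∀ v ∉ S, ∃ u ∈ S, G.Adj u v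

/-- A graph `G` is `k`-compliant if `G` or its complement has a connected dominating
set of cardinality at most `k`. -/
def Compliant {V : Type*} (G : SimpleGraph V) (k : ℕ) : Prop :=
  (∃ S : Finset V, S.card ≤ k ∧ ConnDomSet G S) ∨
    (∃ S : Finset V, S.card ≤ k ∧ ConnDomSet Gᶜ S)

open Finset
open scoped Classical

/-- A finset containing a hub adjacent to all other members induces a connected graph. -/
lemma star_conn {V : Type*} (G : SimpleGraph V) (S : Finset V) (v : V) (hv : v ∈ S)
    (h : ∀ u ∈ S, u ≠ v → G.Adj v u) : (G.induce (↑S : Set V)).Connected := by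
  rw [SimpleGraph.connected_iff]
  refine ⟨?_, ⟨⟨v, hv⟩⟩⟩
  have key : ∀ a : (↑S : Set V), (G.induce (↑S : Set V)).Reachable ⟨v, hv⟩ a := by
    intro a
    by_cases ha : (a : V) = v
    · have : a = ⟨v, hv⟩ := Subtype.ext ha
      rw [this]
    · refine SimpleGraph.Adj.reachable ?_
      simp only [SimpleGraph.comap_adj, Function.Embedding.coe_subtype]
      exact h a a.2 ha
  intro a b
  exact (key a).symm.trans (key b)

/-- One-shot finisher: if nothing is undominated, `S` itself is a CDS. -/
lemma finish0 {V : Type*} [Fintype V] (H : SimpleGraph V) (k : ℕ) (v : V) (S U : Finset V)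
    (hvS : v ∈ S) (hstar : ∀ u ∈ S, u ≠ v → H.Adj v u) (hScard : S.card ≤ k)
    (hchar : ∀ u, u ∈ U ↔ u ∉ S ∧ ∀ s ∈ S, ¬ H.Adj s u) (hU : U.card = 0) :
    ∃ T : Finset V, T.card ≤ k ∧ ConnDomSet H T := by
  refine ⟨S, hScard, ⟨v, hvS⟩, star_conn H S v hvS hstar, ?_⟩
  intro w hw
  have : w ∉ U := by
    rw [Finset.card_eq_zero] at hU
    simp [hU]
  rw [hchar] at this
  push_neg at this
  exact this hw

/-- The greedy growth: with the common-neighbor extraction hypothesis and a small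
initial undominated set, we find a CDS of `H` of size at most `k`. -/
lemma grow {V : Type*} [Fintype V] (H : SimpleGraph V) (k : ℕ) (hk : 3 ≤ k) (v : V)
    (hyp : ∀ X : Finset V, (∀ u ∈ X, ¬ H.Adj v u ∧ u ≠ v) → X.card + 1 ≤ k →
      ∃ y, H.Adj v y ∧ ∀ u ∈ X, H.Adj y u) :
    ∀ N : ℕ, ∀ S : Finset V, v ∈ S → (∀ u ∈ S, u ≠ v → H.Adj v u) → S.card ≤ k →
      ∀ U : Finset V, (∀ u, u ∈ U ↔ u ∉ S ∧ ∀ s ∈ S, ¬ H.Adj s u) →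
      U.card ≤ N → U.card ≤ (k - S.card) * (k - 1) →
      ∃ T : Finset V, T.card ≤ k ∧ ConnDomSet H T := by
  intro N
  induction N with
  | zero =>
    intro S hvS hstar hScard U hchar hN _
    exact finish0 H k v S U hvS hstar hScard hchar (Nat.le_zero.mp hN)
  | succ N ih =>
    intro S hvS hstar hScard U hchar hN hinv
    -- facts used in both nonzero cases
    by_cases hU0 : U.card = 0
    · exact finish0 H k v S U hvS hstar hScard hchar hU0
    have hUpos : 1 ≤ U.card := Nat.one_le_iff_ne_zero.mpr hU0
    have hSlt : S.card < k := by
      rcases Nat.eq_zero_or_pos (k - S.card) with h0 | h1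
      · rw [h0, Nat.zero_mul] at hinv; omega
      · omega
    have hUprop : ∀ u ∈ U, (u ∉ S ∧ ∀ s ∈ S, ¬ H.Adj s u) := fun u hu => (hchar u).mp hu
    have hUv : ∀ u ∈ U, ¬ H.Adj v u ∧ u ≠ v := by
      intro u hu
      obtain ⟨hus, hns⟩ := hUprop u hu
      exact ⟨hns v hvS, fun h => hus (h ▸ hvS)⟩
    by_cases hUsmall : U.card + 1 ≤ k
    · -- final step: one vertex dominates all of U
      obtain ⟨y, hyv, hyU⟩ := hyp U hUv hUsmall
      have hyS : y ∉ S := by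
        obtain ⟨u0, hu0⟩ := Finset.card_pos.mp hUpos
        intro hyS
        exact ((hUprop u0 hu0).2 y hyS) (hyU u0 hu0)
      refine ⟨insert y S, ?_, ⟨v, Finset.mem_insert_of_mem hvS⟩, ?_, ?_⟩
      · rw [Finset.card_insert_of_notMem hyS]; omega
      · refine star_conn H _ v (Finset.mem_insert_of_mem hvS) ?_
        intro u hu hne
        rcases Finset.mem_insert.mp hu with rfl | hu'
        · exact hyv
        · exact hstar u hu' hne
      · intro w hw
        by_cases hwU : w ∈ U
        · exact ⟨y, Finset.mem_insert_self y S, hyU w hwU⟩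
        · rw [hchar] at hwU
          push_neg at hwU
          have hwS : w ∉ S := fun h => hw (Finset.mem_insert_of_mem h)
          obtain ⟨s, hs, hadj⟩ := hwU hwS
          exact ⟨s, Finset.mem_insert_of_mem hs, hadj⟩
    · -- main greedy step: kill k-1 undominated vertices
      have hUbig : k ≤ U.card := by omega
      obtain ⟨X, hXU, hXcard⟩ := Finset.exists_subset_card_eq (show k - 1 ≤ U.card by omega)
      have hXprop : ∀ u ∈ X, ¬ H.Adj v u ∧ u ≠ v := fun u hu => hUv u (hXU hu)
      obtain ⟨y, hyv, hyX⟩ := hyp X hXprop (by omega)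
      have hXpos : 0 < X.card := by omega
      have hyS : y ∉ S := by
        obtain ⟨u0, hu0⟩ := Finset.card_pos.mp hXpos
        intro hyS
        exact ((hUprop u0 (hXU hu0)).2 y hyS) (hyX u0 hu0)
      set S' := insert y S with hS'
      have hS'card : S'.card = S.card + 1 := Finset.card_insert_of_notMem hyS
      set U' := Finset.univ.filter (fun u => u ∉ S' ∧ ∀ s ∈ S', ¬ H.Adj s u) with hU'
      have hchar' : ∀ u, u ∈ U' ↔ u ∉ S' ∧ ∀ s ∈ S', ¬ H.Adj s u := by
        intro u; simp [hU']
      have hsub : U' ⊆ U \ X := by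
        intro u hu
        rw [hchar'] at hu
        obtain ⟨huS', hnadj⟩ := hu
        have huS : u ∉ S := fun h => huS' (Finset.mem_insert_of_mem h)
        have huU : u ∈ U := (hchar u).mpr ⟨huS, fun s hs => hnadj s (Finset.mem_insert_of_mem hs)⟩
        have huX : u ∉ X := by
          intro hx
          exact hnadj y (Finset.mem_insert_self y S) (hyX u hx)
        exact Finset.mem_sdiff.mpr ⟨huU, huX⟩
      have hcardsub : U'.card ≤ U.card - (k - 1) := by
        calc U'.card ≤ (U \ X).card := Finset.card_le_card hsub
        _ = U.card - X.card := Finset.card_sdiff_of_subset hXU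
        _ = U.card - (k - 1) := by rw [hXcard]
      -- invariant for the recursive call
      have harith : U'.card ≤ (k - S'.card) * (k - 1) := by
        have e1 : k - S.card = (k - S.card - 1) + 1 := by omega
        have e2 : k - S'.card = k - S.card - 1 := by omega
        rw [e1] at hinv
        rw [e2]
        have e3 : (k - S.card - 1 + 1) * (k - 1) = (k - S.card - 1) * (k - 1) + (k - 1) := by ring
        rw [e3] at hinv
        generalize (k - S.card - 1) * (k - 1) = P at hinv ⊢
        omega
      refine ih S' (Finset.mem_insert_of_mem hvS) ?_ (by omega) U' hchar' (by omega) harith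
      intro u hu hne
      rcases Finset.mem_insert.mp hu with rfl | hu'
      · exact hyv
      · exact hstar u hu' hne

/-- If `Hᶜ` has no CDS of size at most `k` and some vertex `v` has at most `(k-1)²`
non-neighbors in `H`, then `H` has a CDS of size at most `k`. -/
lemma build {V : Type*} [Fintype V] (H : SimpleGraph V) (k : ℕ) (hk : 3 ≤ k) (v : V)
    (hno : ¬ ∃ S : Finset V, S.card ≤ k ∧ ConnDomSet Hᶜ S)
    (B : Finset V) (hBchar : ∀ u, u ∈ B ↔ (¬ H.Adj v u ∧ u ≠ v))
    (hB : B.card ≤ (k - 1) * (k - 1)) :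
    ∃ S : Finset V, S.card ≤ k ∧ ConnDomSet H S := by
  have hyp : ∀ X : Finset V, (∀ u ∈ X, ¬ H.Adj v u ∧ u ≠ v) → X.card + 1 ≤ k →
      ∃ y, H.Adj v y ∧ ∀ u ∈ X, H.Adj y u := by
    intro X hX hcard
    set Q := insert v X with hQ
    have hvQ : v ∈ Q := Finset.mem_insert_self v X
    have hQcard : Q.card ≤ k := le_trans (Finset.card_insert_le v X) hcard
    have hconn : (Hᶜ.induce (↑Q : Set V)).Connected := by
      refine star_conn Hᶜ Q v hvQ ?_
      intro u hu hne
      rcases Finset.mem_insert.mp hu with rfl | hu'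
      · exact absurd rfl hne
      · exact SimpleGraph.compl_adj H v u |>.mpr ⟨Ne.symm (hX u hu').2, (hX u hu').1⟩
    have hndom : ¬ ∀ w ∉ Q, ∃ u ∈ Q, Hᶜ.Adj u w := by
      intro hdom
      exact hno ⟨Q, hQcard, ⟨v, hvQ⟩, hconn, hdom⟩
    push_neg at hndom
    obtain ⟨w, hwQ, hw⟩ := hndom
    have hadj : ∀ u ∈ Q, H.Adj u w := by
      intro u hu
      have h1 := hw u hu
      rw [SimpleGraph.compl_adj] at h1
      push_neg at h1
      have hne : u ≠ w := fun h => hwQ (h ▸ hu)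
      exact h1 hne
    exact ⟨w, hadj v hvQ, fun u hu => (hadj u (Finset.mem_insert_of_mem hu)).symm⟩
  refine grow H k hk v hyp B.card {v} (Finset.mem_singleton_self v) ?_
    (by rw [Finset.card_singleton]; omega) B ?_ le_rfl ?_
  · intro u hu hne
    exact absurd (Finset.mem_singleton.mp hu) hne
  · intro u
    rw [hBchar]
    simp [and_comm]
  · simpa [Finset.card_singleton] using hB

theorem stmt19 (n : ℕ) (hn : 7 ≤ n) {V : Type*} [Fintype V]
    (G : SimpleGraph V) (hV : Fintype.card V = n)
    (hG : G.Connected) (hGc : Gᶜ.Connected) :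
    (∃ S : Finset V, ConnDomSet G S ∧
        (S.card : ℤ) ≤ ⌈Real.sqrt (2 * (n : ℝ) - 4)⌉ - 1) ∨
    (∃ S : Finset V, ConnDomSet Gᶜ S ∧
        (S.card : ℤ) ≤ ⌈Real.sqrt (2 * (n : ℝ) - 4)⌉ - 1) := by
  set c : ℤ := ⌈Real.sqrt (2 * (n : ℝ) - 4)⌉ with hc
  -- c ≥ 4
  have hn7 : (7 : ℝ) ≤ (n : ℝ) := by exact_mod_cast hn
  have hsq3 : (3 : ℝ) < Real.sqrt (2 * (n : ℝ) - 4) := by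
    rw [show ((3:ℝ) = 3) from rfl]
    rw [Real.lt_sqrt (by norm_num)]
    nlinarith
  have hc4 : 4 ≤ c := by
    have : (3 : ℤ) < c := by
      rw [hc]
      exact Int.lt_ceil.mpr (by exact_mod_cast hsq3)
    omega
  set k : ℕ := (c - 1).toNat with hkdef
  have hkc : (k : ℤ) = c - 1 := Int.toNat_of_nonneg (by omega)
  have hk3 : 3 ≤ k := by omega
  -- 2n ≤ (k+1)² + 4
  have hceil : Real.sqrt (2 * (n : ℝ) - 4) ≤ (c : ℝ) := Int.le_ceil _
  have hc0 : (0 : ℝ) ≤ (c : ℝ) := by exact_mod_cast (by omega : (0:ℤ) ≤ c)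
  have hsqnn : (0 : ℝ) ≤ 2 * (n : ℝ) - 4 := by nlinarith
  have h2n : 2 * (n : ℝ) - 4 ≤ (c : ℝ) ^ 2 := by
    have := Real.sq_sqrt hsqnn
    nlinarith [Real.sqrt_nonneg (2 * (n : ℝ) - 4)]
  have h2nz : 2 * (n : ℤ) ≤ ((k : ℤ) + 1) ^ 2 + 4 := by
    have hck : (c : ℝ) = (k : ℝ) + 1 := by
      have : (c : ℤ) = (k : ℤ) + 1 := by omega
      exact_mod_cast congrArg (Int.cast : ℤ → ℝ) this
    rw [hck] at h2n
    have : 2 * (n : ℝ) ≤ ((k : ℝ) + 1) ^ 2 + 4 := by nlinarith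
    exact_mod_cast this
  have h2nn : 2 * n ≤ (k + 1) * (k + 1) + 4 := by
    have : (2 * n : ℤ) ≤ ((k + 1) * (k + 1) + 4 : ℕ) := by push_cast; nlinarith
    exact_mod_cast this
  -- n - 1 ≤ 2 (k-1)² + 1
  obtain ⟨j, hj⟩ : ∃ j, k = j + 1 := ⟨k - 1, by omega⟩
  have hj2 : 2 ≤ j := by omega
  have hmul : 2 * j ≤ j * j := Nat.mul_le_mul_right j hj2
  have hsmall : n ≤ 2 * (j * j) + 2 := by nlinarith [h2nn, hmul, hj]
  -- pick a vertex
  haveI : Nonempty V := by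
    rw [← Fintype.card_pos_iff, hV]; omega
  obtain ⟨v⟩ := ‹Nonempty V›
  -- the two non-neighborhood counts
  set B1 := Finset.univ.filter (fun u => ¬ G.Adj v u ∧ u ≠ v) with hB1
  set B2 := Finset.univ.filter (fun u => ¬ Gᶜ.Adj v u ∧ u ≠ v) with hB2
  have hB2eq : B2 = Finset.univ.filter (fun u => G.Adj v u) := by
    ext u
    simp only [hB2, Finset.mem_filter, Finset.mem_univ, true_and, SimpleGraph.compl_adj]
    constructor
    · rintro ⟨h1, h2⟩
      push_neg at h1
      exact h1 (Ne.symm h2)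
    · intro h
      exact ⟨fun hh => hh.2 h, (G.ne_of_adj h).symm⟩
  have hB1eq : B1 = (Finset.univ.erase v).filter (fun u => ¬ G.Adj v u) := by
    ext u
    simp only [hB1, Finset.mem_filter, Finset.mem_erase, Finset.mem_univ, true_and, and_true]
    tauto
  have hB2eq' : B2 = (Finset.univ.erase v).filter (fun u => G.Adj v u) := by
    rw [hB2eq]
    ext u
    simp only [Finset.mem_filter, Finset.mem_erase, Finset.mem_univ, true_and, and_true]
    exact ⟨fun h => ⟨(G.ne_of_adj h).symm, h⟩, fun h => h.2⟩
  have hsum : B2.card + B1.card = n - 1 := by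
    rw [hB1eq, hB2eq']
    rw [Finset.card_filter_add_card_filter_not (fun u => G.Adj v u)]
    rw [Finset.card_erase_of_mem (Finset.mem_univ v), Finset.card_univ, hV]
  -- main case analysis
  by_cases h1 : ∃ S : Finset V, S.card ≤ k ∧ ConnDomSet G S
  · obtain ⟨S, hS1, hS2⟩ := h1
    left
    exact ⟨S, hS2, by omega⟩
  by_cases h2 : ∃ S : Finset V, S.card ≤ k ∧ ConnDomSet Gᶜ S
  · obtain ⟨S, hS1, hS2⟩ := h2
    right
    exact ⟨S, hS2, by omega⟩
  exfalso
  have hkj : k - 1 = j := by omega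
  by_cases hcase : B1.card ≤ j * j
  · refine h1 (build G k hk3 v h2 B1 (fun u => by simp [hB1]) ?_)
    rw [hkj]
    exact hcase
  · have hcase2 : B2.card ≤ j * j := by
      generalize hg : j * j = P at hsmall hcase ⊢
      omega
    have hno1 : ¬ ∃ S : Finset V, S.card ≤ k ∧ ConnDomSet Gᶜᶜ S := by
      rw [compl_compl]; exact h1
    refine h2 (build Gᶜ k hk3 v hno1 B2 (fun u => by simp [hB2]) ?_)
    rw [hkj]
    exact hcase2
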